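/- Let X ⊆ ℝ² be a finite set and define the minimal spanning forest edge relation: {x,y} is an edge iff there is no path from x to y in the complete graph on X with all edges strictly shorter than dist(x,y). Then the resulting graph on X is connected. -/

import Mathlib

noncomputable section

abbrev Plane := EuclideanSpace ℝ (Fin 2)

/-- A path from `x` to `y` in the complete graph on `X` all of whose edges are
strictly shorter than `dist x y`. -/
def HasShortcutPath (X : Set Plane) (x y : Plane) : Prop :=
  ∃ l : List Plane, l ≠ [] ∧ (∀ z ∈ l, z ∈ X) ∧
    l.head? = some x ∧ l.getLast? = some y ∧
    l.Chain' (fun a b => dist a b < dist x y)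

/-- `{x, y}` is an edge of the minimal spanning forest of `X`. -/
def MSFEdge (X : Set Plane) (x y : Plane) : Prop :=
  x ∈ X ∧ y ∈ X ∧ x ≠ y ∧ ¬ HasShortcutPath X x y

lemma chain_rtg {R : Plane → Plane → Prop} :
    ∀ (l : List Plane) (x y : Plane), l.head? = some x → l.getLast? = some y →
      l.Chain' (fun a b => Relation.ReflTransGen R a b) →
      Relation.ReflTransGen R x y := by
  intro l
  induction l with
  | nil => intro x y h; simp at h
  | cons a t ih =>
    intro x y hh hl hc
    simp at hh
    subst hh
    cases t with
    | nil =>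
      simp at hl; subst hl; exact Relation.ReflTransGen.refl
    | cons b t' =>
      have h1 : Relation.ReflTransGen R a b := (List.isChain_cons_cons.mp hc).1
      have h2 := (List.isChain_cons_cons.mp hc).2
      have hl' : (b :: t').getLast? = some y := by
        rw [← hl]; simp [List.getLast?_cons_cons]
      exact h1.trans (ih b y rfl hl' h2)


lemma chain'_imp_mem {α : Type*} {R S : α → α → Prop} :
    ∀ l : List α, (∀ a ∈ l, ∀ b ∈ l, R a b → S a b) → l.Chain' R → l.Chain' S := by
  intro l
  induction l with
  | nil => intro _ _; exact List.isChain_nil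
  | cons a t ih =>
    intro h hc
    cases t with
    | nil => exact List.isChain_singleton _
    | cons b t' =>
      replace hc := List.isChain_cons_cons.mp hc; refine List.isChain_cons_cons.mpr ?_
      refine ⟨h a (by simp) b (by simp) hc.1, ih ?_ hc.2⟩
      intro u hu v hv huv
      exact h u (by simp [hu]) v (by simp [hv]) huv

/-- The minimal spanning forest of a finite set `X ⊆ ℝ²` is connected: any two
points of `X` are joined by a chain of MSF edges. -/
theorem msf_connected
    (X : Set Plane) (hX : X.Finite) (x y : Plane) (hx : x ∈ X) (hy : y ∈ X) :
    Relation.ReflTransGen (MSFEdge X) x y := by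
  classical
  set S : Finset ℝ := (hX.toFinset ×ˢ hX.toFinset).image (fun p => dist p.1 p.2) with hS
  have key : ∀ n : ℕ, ∀ x y : Plane, x ∈ X → y ∈ X →
      (S.filter (· < dist x y)).card ≤ n → Relation.ReflTransGen (MSFEdge X) x y := by
    intro n
    induction n with
    | zero =>
      intro x y hx hy hcard
      by_cases hxy : x = y
      · subst hxy; exact Relation.ReflTransGen.refl
      by_cases hedge : HasShortcutPath X x y
      · exfalso
        obtain ⟨l, hne, hmem, hh, hl, hc⟩ := hedge
        -- l has at least two elements since head = x, last = y, x ≠ y? not nec.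
        -- extract a pair a b with dist a b < dist x y
        obtain ⟨a, t, rfl⟩ := List.exists_cons_of_ne_nil hne
        cases t with
        | nil =>
          simp at hh hl
          subst hh hl
          exact hxy rfl
        | cons b t' =>
          have hab : dist a b < dist x y := (List.isChain_cons_cons.mp hc).1
          have haX : a ∈ X := hmem a (by simp)
          have hbX : b ∈ X := hmem b (by simp)
          have hmem' : dist a b ∈ S.filter (· < dist x y) := by
            simp only [Finset.mem_filter, hS, Finset.mem_image]
            refine ⟨⟨(a, b), ?_, rfl⟩, hab⟩
            simp [Finset.mem_product, hX.mem_toFinset, haX, hbX]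
          have : 0 < (S.filter (· < dist x y)).card := Finset.card_pos.mpr ⟨_, hmem'⟩
          omega
      · exact Relation.ReflTransGen.single ⟨hx, hy, hxy, hedge⟩
    | succ m ih =>
      intro x y hx hy hcard
      by_cases hxy : x = y
      · subst hxy; exact Relation.ReflTransGen.refl
      by_cases hedge : HasShortcutPath X x y
      · obtain ⟨l, hne, hmem, hh, hl, hc⟩ := hedge
        have hsub : ∀ a b : Plane, a ∈ X → b ∈ X → dist a b < dist x y →
            (S.filter (· < dist a b)).card ≤ m := by
          intro a b haX hbX hab
          have hss : S.filter (· < dist a b) ⊂ S.filter (· < dist x y) := by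
            refine Finset.ssubset_iff_of_subset ?_ |>.mpr ?_
            · intro d hd
              simp only [Finset.mem_filter] at hd ⊢
              exact ⟨hd.1, hd.2.trans hab⟩
            · refine ⟨dist a b, ?_, ?_⟩
              · simp only [Finset.mem_filter, hS, Finset.mem_image]
                refine ⟨⟨(a, b), ?_, rfl⟩, hab⟩
                simp [Finset.mem_product, hX.mem_toFinset, haX, hbX]
              · simp
          have := Finset.card_lt_card hss
          omega
        -- chain of ReflTransGen along l
        have hc' : l.Chain' (fun a b => Relation.ReflTransGen (MSFEdge X) a b) := by
          have hmem2 : ∀ a b : Plane, a ∈ X → b ∈ X → dist a b < dist x y →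
              Relation.ReflTransGen (MSFEdge X) a b := fun a b haX hbX hab =>
            ih a b haX hbX (hsub a b haX hbX hab)
          -- build from hc
          refine chain'_imp_mem l ?_ hc
          intro a hma b hmb hab
          exact hmem2 a b (hmem a hma) (hmem b hmb) hab
        exact chain_rtg l x y hh hl hc'
      · exact Relation.ReflTransGen.single ⟨hx, hy, hxy, hedge⟩
  exact key _ x y hx hy le_rfl
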